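/- arXiv:1606.03858 — 2 statements merged into one kernel-verified Lean document; each statement's English description precedes it below -/
import Mathlib

section
/- Let μ be a Borel probability measure on ℝ^p with M_d(μ) positive definite and let x̄ ∈ ℝ^p. Then there exists a polynomial P of degree at most d with P(x̄) = 1 such that μ({x ∈ ℝ^p : P(x)^2 ≤ 1}) ≥ 1 − Q_{μ,d}(x̄)^{-1}. -/
open MeasureTheory Finset Matrix

/-- Multi-indices in `p` variables of total degree at most `d`. -/
abbrev MIdx (p d : ℕ) := {α : Fin p → Fin (d + 1) // ∑ i, (α i : ℕ) ≤ d}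

/-- The monomial `x ^ α`. -/
noncomputable def mon {p d : ℕ} (α : MIdx p d) (x : Fin p → ℝ) : ℝ :=
  ∏ i, x i ^ (α.1 i : ℕ)

/-- The moment matrix `M_d(μ)`, with entries `∫ x^(α+β) dμ`. -/
noncomputable def momMat {p : ℕ} (d : ℕ) (μ : Measure (Fin p → ℝ)) :
    Matrix (MIdx p d) (MIdx p d) ℝ :=
  fun α β => ∫ x, mon α x * mon β x ∂μ

/-- Evaluation of the polynomial with coefficient vector `c` at `x`. -/
noncomputable def peval {p d : ℕ} (c : MIdx p d → ℝ) (x : Fin p → ℝ) : ℝ :=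
  ∑ α, c α * mon α x

/-- The vector of monomials `v_d(x)`. -/
noncomputable def vvec {p : ℕ} (d : ℕ) (x : Fin p → ℝ) : MIdx p d → ℝ :=
  fun α => mon α x

/-- Graded lexicographic (strict) order: `glex α β` means `α <_gl β`. -/
def glex {p d : ℕ} (α β : MIdx p d) : Prop :=
  (∑ i, (α.1 i : ℕ)) < (∑ i, (β.1 i : ℕ)) ∨
    ((∑ i, (α.1 i : ℕ)) = (∑ i, (β.1 i : ℕ)) ∧
      ∃ i, (∀ j, j < i → α.1 j = β.1 j) ∧ (β.1 i : ℕ) < (α.1 i : ℕ))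

lemma mon_mul_eq {p d : ℕ} (α β : MIdx p d) (x : Fin p → ℝ) :
    mon α x * mon β x = ∏ i, x i ^ ((α.1 i : ℕ) + (β.1 i : ℕ)) := by
  simp [mon, pow_add, Finset.prod_mul_distrib]

lemma mon_mul_integrable {p d : ℕ} {μ : Measure (Fin p → ℝ)}
    (hmom : ∀ α : Fin p → ℕ, Integrable (fun x => ∏ i, x i ^ α i) μ)
    (α β : MIdx p d) : Integrable (fun x => mon α x * mon β x) μ := by
  have h := hmom (fun i => (α.1 i : ℕ) + (β.1 i : ℕ))
  simpa [← mon_mul_eq] using h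

lemma mon_continuous {p d : ℕ} (α : MIdx p d) : Continuous (mon α) := by
  unfold mon
  exact continuous_finset_prod _ fun i _ => (continuous_apply i).pow _

lemma peval_continuous {p d : ℕ} (c : MIdx p d → ℝ) : Continuous (peval c) := by
  unfold peval
  exact continuous_finset_sum _ fun α _ => continuous_const.mul (mon_continuous α)

lemma sq_peval_eq {p d : ℕ} (c : MIdx p d → ℝ) (x : Fin p → ℝ) :
    (peval c x) ^ 2 = ∑ α, ∑ β, c α * c β * (mon α x * mon β x) := by
  rw [sq, peval, Finset.sum_mul_sum]
  exact Finset.sum_congr rfl fun α _ => Finset.sum_congr rfl fun β _ => by ring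

lemma integrable_sq_peval {p d : ℕ} {μ : Measure (Fin p → ℝ)}
    (hmom : ∀ α : Fin p → ℕ, Integrable (fun x => ∏ i, x i ^ α i) μ)
    (c : MIdx p d → ℝ) : Integrable (fun x => (peval c x) ^ 2) μ := by
  have : (fun x => (peval c x) ^ 2)
      = fun x => ∑ α : MIdx p d, ∑ β : MIdx p d, c α * c β * (mon α x * mon β x) := by
    funext x; exact sq_peval_eq c x
  rw [this]
  exact integrable_finset_sum _ fun α _ => integrable_finset_sum _ fun β _ =>
    ((mon_mul_integrable hmom α β).const_mul _)

lemma integral_sq_peval {p d : ℕ} (μ : Measure (Fin p → ℝ))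
    (hmom : ∀ α : Fin p → ℕ, Integrable (fun x => ∏ i, x i ^ α i) μ)
    (c : MIdx p d → ℝ) :
    ∫ x, (peval c x) ^ 2 ∂μ = c ⬝ᵥ (momMat d μ) *ᵥ c := by
  have h1 : ∫ x, (peval c x) ^ 2 ∂μ
      = ∑ α : MIdx p d, ∑ β : MIdx p d, c α * c β * momMat d μ α β := by
    simp_rw [sq_peval_eq]
    rw [integral_finset_sum _ fun α _ => integrable_finset_sum _ fun β _ =>
      ((mon_mul_integrable hmom α β).const_mul _)]
    refine Finset.sum_congr rfl fun α _ => ?_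
    rw [integral_finset_sum _ fun β _ => ((mon_mul_integrable hmom α β).const_mul _)]
    refine Finset.sum_congr rfl fun β _ => ?_
    rw [integral_const_mul]; rfl
  rw [h1]
  simp only [dotProduct, mulVec, Finset.mul_sum]
  exact Finset.sum_congr rfl fun α _ => Finset.sum_congr rfl fun β _ => by
    ring

/-- there is a polynomial `P` of degree ≤ d with `P(x̄) = 1` whose
sublevel set `{P² ≤ 1}` has μ-measure at least `1 - Q_{μ,d}(x̄)⁻¹`. -/
theorem christoffel_markov_sublevel {p d : ℕ} (μ : Measure (Fin p → ℝ))
    [IsProbabilityMeasure μ]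
    (hmom : ∀ α : Fin p → ℕ, Integrable (fun x => ∏ i, x i ^ α i) μ)
    (hpd : (momMat d μ).PosDef) (xbar : Fin p → ℝ) :
    ∃ c : MIdx p d → ℝ, peval c xbar = 1 ∧
      ENNReal.ofReal (1 - (vvec d xbar ⬝ᵥ (momMat d μ)⁻¹ *ᵥ vvec d xbar)⁻¹) ≤
        μ {x : Fin p → ℝ | (peval c x) ^ 2 ≤ 1} := by
  classical
  set M := momMat d μ with hM
  set v := vvec d xbar with hv
  set Q := v ⬝ᵥ M⁻¹ *ᵥ v with hQdef
  -- v ≠ 0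
  have hvne : v ≠ 0 := by
    intro h
    have h0 : v ⟨fun _ => 0, by simp⟩ = 0 := by rw [h]; rfl
    simp [hv, vvec, mon] at h0
  -- Q > 0
  have hQpos : 0 < Q := by
    have := hpd.inv.dotProduct_mulVec_pos hvne
    simpa [hQdef] using this
  have hQne : Q ≠ 0 := ne_of_gt hQpos
  set w := M⁻¹ *ᵥ v with hw
  set c := Q⁻¹ • w with hc
  have hMunit : IsUnit M.det := (hpd.det_pos).ne'.isUnit
  -- peval c x = c ⬝ᵥ vvec d x
  have hpe : ∀ x, peval c x = c ⬝ᵥ vvec d x := fun x => rfl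
  have hwv : w ⬝ᵥ v = Q := by
    rw [dotProduct_comm]
  have hpx : peval c xbar = 1 := by
    rw [hpe, ← hv, hc, smul_dotProduct, hwv, smul_eq_mul, inv_mul_cancel₀ hQne]
  refine ⟨c, hpx, ?_⟩
  -- integral of P²
  have hMv : M *ᵥ w = v := by
    rw [hw, mulVec_mulVec, Matrix.mul_nonsing_inv M hMunit, one_mulVec]
  have hint : ∫ x, (peval c x) ^ 2 ∂μ = Q⁻¹ := by
    rw [integral_sq_peval μ hmom c, hc]
    rw [smul_dotProduct, mulVec_smul, dotProduct_smul, hMv, hwv]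
    simp only [smul_eq_mul]; field_simp
  -- Markov
  set f := fun x => (peval c x) ^ 2 with hf
  have hfnn : 0 ≤ᵐ[μ] f := Filter.Eventually.of_forall fun x => sq_nonneg _
  have hfint : Integrable f μ := integrable_sq_peval hmom c
  have hmarkov := mul_meas_ge_le_integral_of_nonneg hfnn hfint 1
  rw [one_mul, hint] at hmarkov
  have hmeas : MeasurableSet {x : Fin p → ℝ | f x ≤ 1} :=
    measurableSet_le ((peval_continuous c).pow 2).measurable measurable_const
  have hcompl : μ ({x : Fin p → ℝ | f x ≤ 1})ᶜ ≤ ENNReal.ofReal Q⁻¹ := by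
    have hsub : ({x : Fin p → ℝ | f x ≤ 1})ᶜ ⊆ {x | 1 ≤ f x} := by
      intro x hx
      simp only [Set.mem_compl_iff, Set.mem_setOf_eq, not_le] at hx
      exact le_of_lt hx
    refine le_trans (measure_mono hsub) ?_
    rw [ENNReal.le_ofReal_iff_toReal_le (measure_ne_top μ _) (by positivity)]
    exact hmarkov
  have hμS : μ {x : Fin p → ℝ | f x ≤ 1} = 1 - μ ({x : Fin p → ℝ | f x ≤ 1})ᶜ := by
    rw [← prob_compl_eq_one_sub hmeas.compl, compl_compl]
  calc ENNReal.ofReal (1 - Q⁻¹) = 1 - ENNReal.ofReal Q⁻¹ := by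
        rw [ENNReal.ofReal_sub _ (by positivity), ENNReal.ofReal_one]
    _ ≤ 1 - μ ({x : Fin p → ℝ | f x ≤ 1})ᶜ := tsub_le_tsub_left hcompl 1
    _ = μ {x : Fin p → ℝ | f x ≤ 1} := hμS.symm
end

section
/- Let μ be a Borel probability measure on ℝ^p with M_d(μ) positive definite. The convex optimization problem: minimize (1/2) Σ_{|α|≤d} ∫ Q_α(x)² dμ(x) over polynomials Q_α of degree ≤ d and reals θ_α, subject to (i) the coefficient q_{αβ} of x^β in Q_α vanishes whenever α <_gl β, (ii) q_{αα} ≥ exp(θ_α), and (iii) Σ_α θ_α = 0, has a unique optimal solution, given by Q*_α = √λ · P_α and θ*_α = log(√λ · c_α), where {P_α} are the orthonormal polynomials with leading coefficients c_α > 0 and λ = (∏_α c_α)^{−2/s(d)}. Consequently Σ_α (Q*_α)² = λ · Q_{μ,d}. -/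
open MeasureTheory Finset Matrix

section cardinality

/-- Step A equiv. -/
def midxEquiv (p d : ℕ) : MIdx p d ≃ {f : Fin (p+1) → ℕ // ∑ i, f i = d} where
  toFun α := ⟨Fin.snoc (fun i => (α.1 i : ℕ)) (d - ∑ i, (α.1 i : ℕ)), by
    rw [Fin.sum_snoc]; exact Nat.add_sub_cancel' α.2⟩
  invFun f := ⟨fun i => ⟨f.1 i.castSucc, by
      have h1 : f.1 i.castSucc ≤ ∑ j, f.1 j :=
        Finset.single_le_sum (fun j _ => Nat.zero_le _) (Finset.mem_univ _)
      have h2 := f.2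
      omega⟩, by
    have := f.2
    rw [Fin.sum_univ_castSucc] at this
    simp only
    omega⟩
  left_inv α := by
    ext i
    simp [Fin.snoc_castSucc]
  right_inv f := by
    ext j
    refine Fin.lastCases ?_ ?_ j
    · have := f.2
      rw [Fin.sum_univ_castSucc] at this
      simp only [Fin.snoc_last]
      omega
    · intro i
      simp [Fin.snoc_castSucc]

/-- Step B equiv. -/
def sumEquivSym (n k : ℕ) : {f : Fin n → ℕ // ∑ i, f i = k} ≃ Sym (Fin n) k where
  toFun f := ⟨∑ i, f.1 i • ({i} : Multiset (Fin n)), by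
    simp only [Multiset.card_sum, Multiset.card_nsmul, Multiset.card_singleton, smul_eq_mul, mul_one]
    exact f.2⟩
  invFun m := ⟨fun i => m.1.count i, by
    have h : ∑ i : Fin n, m.1.count i = ∑ a ∈ m.1.toFinset, m.1.count a :=
      (Finset.sum_subset (Finset.subset_univ _) (fun x _ hx =>
        Multiset.count_eq_zero.2 (fun hmem => hx (Multiset.mem_toFinset.2 hmem)))).symm
    rw [h, Multiset.toFinset_sum_count_eq]
    exact m.2⟩
  left_inv f := by
    ext i
    simp [Multiset.count_sum', Multiset.count_nsmul, Multiset.count_singleton]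
  right_inv m := by
    ext1
    show ∑ i : Fin n, m.1.count i • ({i} : Multiset (Fin n)) = m.1
    have h : ∑ i : Fin n, m.1.count i • ({i} : Multiset (Fin n)) =
        ∑ a ∈ m.1.toFinset, m.1.count a • ({a} : Multiset (Fin n)) :=
      (Finset.sum_subset (Finset.subset_univ _) (fun x _ hx => by
        have : m.1.count x = 0 :=
          Multiset.count_eq_zero.2 (fun hmem => hx (Multiset.mem_toFinset.2 hmem))
        rw [this, zero_smul])).symm
    rw [h, Multiset.toFinset_sum_count_nsmul_eq]

lemma card_MIdx (p d : ℕ) : Fintype.card (MIdx p d) = (p + d).choose d := by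
  rw [Fintype.card_congr ((midxEquiv p d).trans (sumEquivSym (p+1) d))]
  rw [Sym.card_sym_eq_choose]
  congr 1
  rw [Fintype.card_fin]
  omega

end cardinality
section glexlemmas
variable {p d : ℕ}

lemma glex_irrefl (α : MIdx p d) : ¬ glex α α := by
  rintro (h | ⟨-, i, -, h⟩) <;> omega

lemma glex_trans {α β γ : MIdx p d} (h1 : glex α β) (h2 : glex β γ) : glex α γ := by
  rcases h1 with h1 | ⟨e1, i, hpre1, hi⟩
  · rcases h2 with h2 | ⟨e2, -, -, -⟩
    · exact Or.inl (h1.trans h2)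
    · exact Or.inl (e2 ▸ h1)
  · rcases h2 with h2 | ⟨e2, j, hpre2, hj⟩
    · exact Or.inl (e1 ▸ h2)
    · refine Or.inr ⟨e1.trans e2, ?_⟩
      rcases le_total i j with hij | hij
      · refine ⟨i, fun k hk => (hpre1 k hk).trans (hpre2 k (lt_of_lt_of_le hk hij)), ?_⟩
        rcases lt_or_eq_of_le hij with hlt | heq
        · rw [← hpre2 i hlt]; exact hi
        · subst heq; omega
      · refine ⟨j, fun k hk => (hpre1 k (lt_of_lt_of_le hk hij)).trans (hpre2 k hk), ?_⟩
        rcases lt_or_eq_of_le hij with hlt | heq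
        · rw [hpre1 j hlt]; exact hj
        · subst heq; omega

lemma glex_trichotomy (α β : MIdx p d) : glex α β ∨ α = β ∨ glex β α := by
  rcases lt_trichotomy (∑ i, (α.1 i : ℕ)) (∑ i, (β.1 i : ℕ)) with h | h | h
  · exact Or.inl (Or.inl h)
  · by_cases hab : α = β
    · exact Or.inr (Or.inl hab)
    · have hne : ∃ i, α.1 i ≠ β.1 i := by
        by_contra hc
        push_neg at hc
        exact hab (Subtype.ext (funext hc))
      set S : Finset (Fin p) := Finset.univ.filter (fun i => α.1 i ≠ β.1 i) with hS
      have hSne : S.Nonempty := by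
        obtain ⟨i, hi⟩ := hne
        exact ⟨i, by simp [hS, hi]⟩
      set i := S.min' hSne with hidef
      have himem : i ∈ S := S.min'_mem hSne
      have hine : α.1 i ≠ β.1 i := by simpa [hS] using himem
      have hpre : ∀ j, j < i → α.1 j = β.1 j := by
        intro j hj
        by_contra hc
        exact absurd (S.min'_le j (by simp [hS, hc])) (not_le.2 hj)
      have hvne : (α.1 i : ℕ) ≠ (β.1 i : ℕ) := fun hc => hine (Fin.ext hc)
      rcases lt_or_gt_of_ne hvne with hlt | hgt
      · exact Or.inr (Or.inr (Or.inr ⟨h.symm, i, fun j hj => (hpre j hj).symm, hlt⟩))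
      · exact Or.inl (Or.inr ⟨h, i, hpre, hgt⟩)
  · exact Or.inr (Or.inr (Or.inl h))

lemma glex_asymm {α β : MIdx p d} (h1 : glex α β) (h2 : glex β α) : False :=
  glex_irrefl α (glex_trans h1 h2)

lemma glex_total_of_ne {α β : MIdx p d} (h1 : ¬ glex α β) (h2 : α ≠ β) : glex β α := by
  rcases glex_trichotomy α β with h | h | h
  · exact absurd h h1
  · exact absurd h h2
  · exact h

end glexlemmas

section integration
variable {p d : ℕ} {μ : Measure (Fin p → ℝ)}

lemma mon_mul_mon (γ δ : MIdx p d) (x : Fin p → ℝ) :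
    mon γ x * mon δ x = ∏ i, x i ^ ((γ.1 i : ℕ) + (δ.1 i : ℕ)) := by
  rw [mon, mon, ← Finset.prod_mul_distrib]
  exact Finset.prod_congr rfl fun i _ => (pow_add _ _ _).symm

lemma integrable_mon_mul (hmom : ∀ α : Fin p → ℕ, Integrable (fun x => ∏ i, x i ^ α i) μ)
    (γ δ : MIdx p d) : Integrable (fun x => mon γ x * mon δ x) μ := by
  have h := hmom (fun i => (γ.1 i : ℕ) + (δ.1 i : ℕ))
  refine h.congr ?_
  filter_upwards with x
  exact (mon_mul_mon γ δ x).symm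

lemma integral_peval_mul (hmom : ∀ α : Fin p → ℕ, Integrable (fun x => ∏ i, x i ^ α i) μ)
    (c c' : MIdx p d → ℝ) :
    ∫ x, peval c x * peval c' x ∂μ = c ⬝ᵥ (momMat d μ) *ᵥ c' := by
  have key : ∀ x, peval c x * peval c' x
      = ∑ γ : MIdx p d, ∑ δ : MIdx p d, c γ * c' δ * (mon γ x * mon δ x) := by
    intro x
    rw [peval, peval, Finset.sum_mul_sum]
    exact Finset.sum_congr rfl fun γ _ => Finset.sum_congr rfl fun δ _ => by ring
  calc ∫ x, peval c x * peval c' x ∂μ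
      = ∫ x, ∑ γ : MIdx p d, ∑ δ : MIdx p d, c γ * c' δ * (mon γ x * mon δ x) ∂μ := by
        simp_rw [key]
    _ = ∑ γ : MIdx p d, ∑ δ : MIdx p d, c γ * c' δ * momMat d μ γ δ := by
        rw [integral_finset_sum _ (fun γ _ => integrable_finset_sum _
          (fun δ _ => ((integrable_mon_mul hmom γ δ).const_mul _)))]
        refine Finset.sum_congr rfl fun γ _ => ?_
        rw [integral_finset_sum _ (fun δ _ => ((integrable_mon_mul hmom γ δ).const_mul _))]
        refine Finset.sum_congr rfl fun δ _ => ?_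
        rw [MeasureTheory.integral_const_mul]
        rfl
    _ = c ⬝ᵥ (momMat d μ) *ᵥ c' := by
        simp only [dotProduct, Matrix.mulVec, Finset.mul_sum]
        exact Finset.sum_congr rfl fun γ _ => Finset.sum_congr rfl fun δ _ => by ring

lemma integrable_mon_mul_peval (hmom : ∀ α : Fin p → ℕ, Integrable (fun x => ∏ i, x i ^ α i) μ)
    (δ : MIdx p d) (c : MIdx p d → ℝ) :
    Integrable (fun x => mon δ x * peval c x) μ := by
  have : (fun x => mon δ x * peval c x) =
      fun x => ∑ γ : MIdx p d, c γ * (mon γ x * mon δ x) := by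
    funext x
    rw [peval, Finset.mul_sum]
    exact Finset.sum_congr rfl fun γ _ => by ring
  rw [this]
  exact integrable_finset_sum _ (fun γ _ => (integrable_mon_mul hmom γ δ).const_mul _)

lemma integral_mon_mul_peval (hmom : ∀ α : Fin p → ℕ, Integrable (fun x => ∏ i, x i ^ α i) μ)
    (δ : MIdx p d) (c : MIdx p d → ℝ) :
    ∫ x, mon δ x * peval c x ∂μ = ∑ γ : MIdx p d, c γ * momMat d μ γ δ := by
  have key : ∀ x, mon δ x * peval c x = ∑ γ : MIdx p d, c γ * (mon γ x * mon δ x) := by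
    intro x
    rw [peval, Finset.mul_sum]
    exact Finset.sum_congr rfl fun γ _ => by ring
  simp_rw [key]
  rw [integral_finset_sum _ (fun γ _ => (integrable_mon_mul hmom γ δ).const_mul _)]
  exact Finset.sum_congr rfl fun γ _ => by rw [MeasureTheory.integral_const_mul]; rfl

lemma triple_apply {ι : Type*} [Fintype ι] [DecidableEq ι] (L M : Matrix ι ι ℝ) (α β : ι) :
    (L * M * Lᵀ) α β = (fun γ => L α γ) ⬝ᵥ M *ᵥ (fun γ => L β γ) := by
  simp only [Matrix.mul_apply, Matrix.transpose_apply, dotProduct, Matrix.mulVec,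
    Finset.sum_mul, Finset.mul_sum]
  rw [Finset.sum_comm]
  exact Finset.sum_congr rfl fun γ _ => Finset.sum_congr rfl fun δ _ => by ring

end integration

lemma mulVec_apply' {ι : Type*} [Fintype ι] (A : Matrix ι ι ℝ) (v : ι → ℝ) (i : ι) :
    (A *ᵥ v) i = ∑ j, A i j * v j := rfl

set_option maxHeartbeats 3000000 in
/-- the convex optimization problem over families of polynomials
has the unique optimal solution `Q*_α = √λ P_α`, `θ*_α = log(√λ c_α)`, and the
resulting SOS polynomial is `λ Q_{μ,d}`. -/
theorem variational_characterization_inverse_moment_sos {p d : ℕ}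
    (μ : Measure (Fin p → ℝ)) [IsProbabilityMeasure μ]
    (hmom : ∀ α : Fin p → ℕ, Integrable (fun x => ∏ i, x i ^ α i) μ)
    (hpd : (momMat d μ).PosDef)
    (Pc : MIdx p d → MIdx p d → ℝ)
    (hcoef : ∀ α β : MIdx p d, glex α β → Pc α β = 0)
    (hlead : ∀ α : MIdx p d, 0 < Pc α α)
    (horth : ∀ α β : MIdx p d, glex β α → ∫ x, mon β x * peval (Pc α) x ∂μ = 0)
    (hnorm : ∀ α : MIdx p d, ∫ x, (peval (Pc α) x) ^ 2 ∂μ = 1)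
    (lam : ℝ) (hlam : lam = (∏ α : MIdx p d, Pc α α) ^ (-2 / ((p + d).choose d : ℝ)))
    (Qstar : MIdx p d → MIdx p d → ℝ)
    (hQstar : Qstar = fun α β => Real.sqrt lam * Pc α β)
    (θstar : MIdx p d → ℝ)
    (hθstar : θstar = fun α => Real.log (Real.sqrt lam * Pc α α))
    (Feasible : (MIdx p d → MIdx p d → ℝ) → (MIdx p d → ℝ) → Prop)
    (hFeas : Feasible = fun Q θ =>
      (∀ α β : MIdx p d, glex α β → Q α β = 0) ∧
        (∀ α : MIdx p d, Real.exp (θ α) ≤ Q α α) ∧ ∑ α : MIdx p d, θ α = 0)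
    (obj : (MIdx p d → MIdx p d → ℝ) → ℝ)
    (hobj : obj = fun Q => (1 / 2) * ∑ α : MIdx p d, ∫ x, (peval (Q α) x) ^ 2 ∂μ) :
    Feasible Qstar θstar ∧
      (∀ Q θ, Feasible Q θ → obj Qstar ≤ obj Q) ∧
      (∀ Q θ, Feasible Q θ → obj Q = obj Qstar → Q = Qstar ∧ θ = θstar) ∧
      ∀ x : Fin p → ℝ,
        ∑ α : MIdx p d, (peval (Qstar α) x) ^ 2 =
          lam * (vvec d x ⬝ᵥ (momMat d μ)⁻¹ *ᵥ vvec d x) := by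
  classical
  subst hQstar hθstar hFeas hobj
  -- scalar setup
  set z : ℝ := ∏ α : MIdx p d, Pc α α with hzdef
  have hz : (0:ℝ) < z := Finset.prod_pos fun α _ => hlead α
  have hs0 : 0 < (p + d).choose d := Nat.choose_pos (Nat.le_add_left d p)
  have hcard : (Fintype.card (MIdx p d) : ℝ) = ((p + d).choose d : ℝ) := by
    rw [card_MIdx]
  set a : ℝ := Real.log z * (-2 / ((p + d).choose d : ℝ)) with hadef
  have hexpa : Real.exp a = lam := by
    rw [hlam, Real.rpow_def_of_pos hz, hadef]
  have hlampos : 0 < lam := hexpa ▸ Real.exp_pos a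
  have hsqrt_exp : Real.sqrt lam = Real.exp (a / 2) := by
    rw [show lam = Real.exp (a / 2) * Real.exp (a / 2) by
      rw [← Real.exp_add, ← hexpa]; ring_nf]
    exact Real.sqrt_mul_self (Real.exp_pos _).le
  have hsqrtpos : 0 < Real.sqrt lam := hsqrt_exp ▸ Real.exp_pos _
  have hcard_a : (Fintype.card (MIdx p d) : ℝ) * a = -2 * Real.log z := by
    rw [hcard, hadef]
    have : ((p + d).choose d : ℝ) ≠ 0 := Nat.cast_ne_zero.2 hs0.ne'
    field_simp
  have hlogz : ∑ α : MIdx p d, Real.log (Pc α α) = Real.log z := by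
    rw [hzdef]
    exact (Real.log_prod fun α _ => (hlead α).ne').symm
  have hθstar_eq : ∀ α : MIdx p d,
      Real.log (Real.sqrt lam * Pc α α) = a / 2 + Real.log (Pc α α) := by
    intro α
    rw [Real.log_mul (ne_of_gt hsqrtpos) (hlead α).ne', hsqrt_exp, Real.log_exp]
  -- matrix setup
  set L : Matrix (MIdx p d) (MIdx p d) ℝ := Matrix.of fun α β => Pc α β with hLdef
  set M : Matrix (MIdx p d) (MIdx p d) ℝ := momMat d μ with hMdef
  have hortho : ∀ α β : MIdx p d, glex β α →
      ∫ x, peval (Pc β) x * peval (Pc α) x ∂μ = 0 := by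
    intro α β hβα
    have expand : ∀ x, peval (Pc β) x * peval (Pc α) x
        = ∑ γ : MIdx p d, Pc β γ * (mon γ x * peval (Pc α) x) := by
      intro x; rw [peval, Finset.sum_mul]
      exact Finset.sum_congr rfl fun γ _ => by ring
    simp_rw [expand]
    rw [integral_finset_sum _ fun γ _ => (integrable_mon_mul_peval hmom γ (Pc α)).const_mul _]
    refine Finset.sum_eq_zero fun γ _ => ?_
    by_cases hγ : Pc β γ = 0
    · simp [hγ]
    · have hγα : glex γ α := by
        rcases glex_trichotomy γ β with h | h | h
        · exact glex_trans h hβα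
        · exact h ▸ hβα
        · exact absurd (hcoef β γ h) hγ
      rw [MeasureTheory.integral_const_mul, horth α γ hγα, mul_zero]
  have hLML : L * M * Lᵀ = 1 := by
    ext α β
    rw [triple_apply]
    have h1 : (fun γ => L α γ) ⬝ᵥ M *ᵥ (fun γ => L β γ)
        = ∫ x, peval (Pc α) x * peval (Pc β) x ∂μ := by
      rw [integral_peval_mul hmom (Pc α) (Pc β)]; rfl
    rw [h1]
    by_cases hab : α = β
    · subst hab
      rw [Matrix.one_apply_eq, ← hnorm α]
      exact MeasureTheory.integral_congr_ae
        (Filter.Eventually.of_forall fun x => (pow_two _).symm)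
    · rw [Matrix.one_apply_ne hab]
      rcases glex_trichotomy α β with h | h | h
      · exact hortho β α h
      · exact absurd h hab
      · rw [← hortho α β h]
        exact MeasureTheory.integral_congr_ae
          (Filter.Eventually.of_forall fun x => mul_comm _ _)
  have hTLM : Lᵀ * L * M = 1 := by
    have h2 : Lᵀ * (L * M) = 1 := mul_eq_one_comm.mp hLML
    rwa [← Matrix.mul_assoc] at h2
  have hMinv : M⁻¹ = Lᵀ * L := Matrix.inv_eq_left_inv hTLM
  have hrep : ∀ c : MIdx p d → ℝ, Lᵀ *ᵥ ((L * M) *ᵥ c) = c := by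
    intro c
    rw [Matrix.mulVec_mulVec, ← Matrix.mul_assoc, hTLM, Matrix.one_mulVec]
  have hquad : ∀ c : MIdx p d → ℝ,
      c ⬝ᵥ M *ᵥ c = ((L * M) *ᵥ c) ⬝ᵥ ((L * M) *ᵥ c) := by
    intro c
    have key : ∀ r : MIdx p d → ℝ, (Lᵀ *ᵥ r) ⬝ᵥ M *ᵥ (Lᵀ *ᵥ r) = r ⬝ᵥ r := by
      intro r
      rw [Matrix.mulVec_mulVec, Matrix.mulVec_transpose, Matrix.dotProduct_mulVec,
        Matrix.vecMul_vecMul, ← Matrix.mul_assoc, hLML, Matrix.vecMul_one]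
    rw [← key ((L * M) *ᵥ c), hrep c]
  have hLMapply : ∀ β δ : MIdx p d, (L * M) β δ = ∫ x, mon δ x * peval (Pc β) x ∂μ := by
    intro β δ
    rw [integral_mon_mul_peval hmom δ (Pc β), Matrix.mul_apply]
    rfl
  have hsupp : ∀ (Q : MIdx p d → MIdx p d → ℝ), (∀ α β, glex α β → Q α β = 0) →
      ∀ α β : MIdx p d, glex α β → ((L * M) *ᵥ Q α) β = 0 := by
    intro Q hQ α β hαβ
    rw [mulVec_apply']
    refine Finset.sum_eq_zero fun δ _ => ?_
    by_cases hδ : Q α δ = 0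
    · rw [hδ, mul_zero]
    · have hδβ : glex δ β := by
        rcases glex_trichotomy δ α with h | h | h
        · exact glex_trans h hαβ
        · exact h ▸ hαβ
        · exact absurd (hQ α δ h) hδ
      rw [hLMapply, horth β δ hδβ, zero_mul]
  have hdiag : ∀ (Q : MIdx p d → MIdx p d → ℝ), (∀ α β, glex α β → Q α β = 0) →
      ∀ α : MIdx p d, Q α α = ((L * M) *ᵥ Q α) α * Pc α α := by
    intro Q hQ α
    conv_lhs => rw [← hrep (Q α)]
    rw [mulVec_apply']
    rw [Finset.sum_eq_single α (fun β _ hβ => ?side) (fun h => absurd (Finset.mem_univ α) h)]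
    · rw [Matrix.transpose_apply]
      exact mul_comm (Pc α α) _
    case side =>
      rcases glex_trichotomy β α with h | h | h
      · rw [Matrix.transpose_apply]
        show Pc β α * _ = 0
        rw [hcoef β α h, zero_mul]
      · exact absurd h hβ
      · rw [hsupp Q hQ α β h, mul_zero]
  have hA : ∀ c : MIdx p d → ℝ,
      ∫ x, (peval c x) ^ 2 ∂μ = ∑ β : MIdx p d, ((L * M) *ᵥ c) β ^ 2 := by
    intro c
    have h1 : ∫ x, (peval c x) ^ 2 ∂μ = ∫ x, peval c x * peval c x ∂μ :=
      MeasureTheory.integral_congr_ae (Filter.Eventually.of_forall fun x => pow_two _)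
    rw [h1, integral_peval_mul hmom, ← hMdef, hquad c]
    simp [dotProduct, pow_two]
  -- the per-α step
  have hstep : ∀ (Q : MIdx p d → MIdx p d → ℝ) (θ : MIdx p d → ℝ),
      (∀ α β, glex α β → Q α β = 0) → (∀ α, Real.exp (θ α) ≤ Q α α) →
      ∀ α : MIdx p d,
        lam * (1 + (2 * θ α - 2 * Real.log (Pc α α) - a)) ≤ ∫ x, (peval (Q α) x) ^ 2 ∂μ ∧
        (∫ x, (peval (Q α) x) ^ 2 ∂μ = lam * (1 + (2 * θ α - 2 * Real.log (Pc α α) - a)) →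
          θ α = a / 2 + Real.log (Pc α α) ∧ Q α = fun γ => Real.sqrt lam * Pc α γ) := by
    intro Q θ hQ1 hQ2 α
    obtain ⟨r, hrdef⟩ : ∃ r, r = (L * M) *ᵥ Q α := ⟨_, rfl⟩
    set t := 2 * θ α - 2 * Real.log (Pc α α) with htdef
    have hI : ∫ x, (peval (Q α) x) ^ 2 ∂μ = ∑ β : MIdx p d, r β ^ 2 := by
      rw [hA (Q α), ← hrdef]
    have hQpos : 0 < Q α α := lt_of_lt_of_le (Real.exp_pos _) (hQ2 α)
    have hd : Q α α = r α * Pc α α := by rw [hrdef]; exact hdiag Q hQ1 α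
    have hrα : r α = Q α α / Pc α α := (eq_div_iff (hlead α).ne').2 hd.symm
    have hrαpos : 0 < r α := hrα ▸ div_pos hQpos (hlead α)
    have hlow : Real.exp (θ α) / Pc α α ≤ r α := by
      rw [hrα]
      exact (div_le_div_iff_of_pos_right (hlead α)).2 (hQ2 α)
    have hexp_t : Real.exp t = (Real.exp (θ α) / Pc α α) ^ 2 := by
      rw [htdef, show 2 * θ α - 2 * Real.log (Pc α α)
          = (θ α - Real.log (Pc α α)) + (θ α - Real.log (Pc α α)) by ring,
        Real.exp_add, ← pow_two, Real.exp_sub, Real.exp_log (hlead α)]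
    have htangent : lam * (1 + (t - a)) ≤ Real.exp t := by
      have h1 : (t - a) + 1 ≤ Real.exp (t - a) := Real.add_one_le_exp _
      calc lam * (1 + (t - a)) = Real.exp a * ((t - a) + 1) := by rw [← hexpa]; ring
        _ ≤ Real.exp a * Real.exp (t - a) :=
            mul_le_mul_of_nonneg_left h1 (Real.exp_pos a).le
        _ = Real.exp t := by rw [← Real.exp_add]; ring_nf
    have hsq : Real.exp t ≤ r α ^ 2 := by
      rw [hexp_t]
      exact pow_le_pow_left₀ (le_of_lt (div_pos (Real.exp_pos _) (hlead α))) hlow 2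
    have hsum_ge : r α ^ 2 ≤ ∑ β : MIdx p d, r β ^ 2 :=
      Finset.single_le_sum (fun β _ => sq_nonneg (r β)) (Finset.mem_univ α)
    constructor
    · rw [hI]; exact le_trans htangent (le_trans hsq hsum_ge)
    · intro heq
      rw [hI] at heq
      have e1 : Real.exp t = lam * (1 + (t - a)) := by linarith
      have e2 : r α ^ 2 = Real.exp t := by linarith
      have e3 : ∑ β : MIdx p d, r β ^ 2 = r α ^ 2 := by linarith
      have hta : t = a := by
        by_contra hne
        have h2 : (t - a) + 1 < Real.exp (t - a) := Real.add_one_lt_exp (sub_ne_zero.2 hne)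
        have h3 : lam * (1 + (t - a)) < Real.exp t := by
          calc lam * (1 + (t - a)) = Real.exp a * ((t - a) + 1) := by rw [← hexpa]; ring
            _ < Real.exp a * Real.exp (t - a) := mul_lt_mul_of_pos_left h2 (Real.exp_pos a)
            _ = Real.exp t := by rw [← Real.exp_add]; ring_nf
        linarith
      have hθα : θ α = a / 2 + Real.log (Pc α α) := by
        rw [htdef] at hta; linarith
      have h5 : r α ^ 2 - (Real.exp (θ α) / Pc α α) ^ 2 = 0 := by
        rw [e2, hexp_t]; ring
      have h6 : (r α - Real.exp (θ α) / Pc α α) * (r α + Real.exp (θ α) / Pc α α) = 0 := by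
        rw [show (r α - Real.exp (θ α) / Pc α α) * (r α + Real.exp (θ α) / Pc α α)
          = r α ^ 2 - (Real.exp (θ α) / Pc α α) ^ 2 by ring, h5]
      have hqpos : 0 < Real.exp (θ α) / Pc α α := div_pos (Real.exp_pos _) (hlead α)
      have e4 : r α = Real.exp (θ α) / Pc α α := by
        rcases mul_eq_zero.mp h6 with h | h
        · linarith
        · linarith
      have hQαα : Q α α = Real.exp (θ α) := by
        have h7 : Q α α / Pc α α = Real.exp (θ α) / Pc α α := hrα ▸ e4
        have h8 := congrArg (fun y => y * Pc α α) h7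
        simpa [div_mul_cancel₀, (hlead α).ne'] using h8
      have hQαα' : Q α α = Real.sqrt lam * Pc α α := by
        rw [hQαα, hθα, Real.exp_add, Real.exp_log (hlead α), hsqrt_exp]
      have hrα' : r α = Real.sqrt lam := by
        rw [hrα, hQαα']
        exact mul_div_cancel_right₀ _ (hlead α).ne'
      have hzero : ∀ β : MIdx p d, β ≠ α → r β = 0 := by
        intro β hβ
        have h8 : ∑ β' ∈ Finset.univ.erase α, r β' ^ 2 = 0 := by
          have h9 := Finset.add_sum_erase Finset.univ (fun β' => r β' ^ 2) (Finset.mem_univ α)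
          linarith
        have h10 := (Finset.sum_eq_zero_iff_of_nonneg
          (fun β' _ => sq_nonneg (r β'))).mp h8 β (Finset.mem_erase.2 ⟨hβ, Finset.mem_univ β⟩)
        exact pow_eq_zero_iff two_ne_zero |>.mp h10
      refine ⟨hθα, ?_⟩
      funext γ
      have h11 : Q α γ = (Lᵀ *ᵥ r) γ := by rw [hrdef, hrep]
      rw [h11, mulVec_apply',
        Finset.sum_eq_single α (fun β _ hβ => by rw [hzero β hβ, mul_zero])
          (fun h => absurd (Finset.mem_univ α) h),
        Matrix.transpose_apply, hrα']
      exact mul_comm (Pc α γ) _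
  -- the sum identity
  have hsumlam : ∀ θ : MIdx p d → ℝ, ∑ α : MIdx p d, θ α = 0 →
      ∑ α : MIdx p d, lam * (1 + (2 * θ α - 2 * Real.log (Pc α α) - a))
        = (Fintype.card (MIdx p d) : ℝ) * lam := by
    intro θ hθ
    rw [← Finset.mul_sum]
    have h1 : ∑ α : MIdx p d, (1 + (2 * θ α - 2 * Real.log (Pc α α) - a))
        = (Fintype.card (MIdx p d) : ℝ) * 1 + (2 * (∑ α : MIdx p d, θ α)
            - 2 * (∑ α : MIdx p d, Real.log (Pc α α))
            - (Fintype.card (MIdx p d) : ℝ) * a) := by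
      rw [Finset.sum_add_distrib, Finset.sum_sub_distrib, Finset.sum_sub_distrib,
        ← Finset.mul_sum, ← Finset.mul_sum]
      simp [Finset.card_univ, mul_comm]
    rw [h1, hθ, hlogz]
    have h2 := hcard_a
    ring_nf
    ring_nf at h2
    nlinarith [h2]
  -- value at the optimum
  have hpevalQstar : ∀ (α : MIdx p d) (x : Fin p → ℝ),
      peval (fun β => Real.sqrt lam * Pc α β) x = Real.sqrt lam * peval (Pc α) x := by
    intro α x
    rw [peval, peval, Finset.mul_sum]
    exact Finset.sum_congr rfl fun β _ => by ring
  have hintQstar : ∀ α : MIdx p d,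
      ∫ x, (peval (fun β => Real.sqrt lam * Pc α β) x) ^ 2 ∂μ = lam := by
    intro α
    have h1 : ∀ x, (peval (fun β => Real.sqrt lam * Pc α β) x) ^ 2
        = lam * (peval (Pc α) x) ^ 2 := by
      intro x; rw [hpevalQstar, mul_pow, Real.sq_sqrt hlampos.le]
    simp_rw [h1]
    rw [MeasureTheory.integral_const_mul, hnorm α, mul_one]
  have hobjstar : (1/2 : ℝ) * ∑ α : MIdx p d,
      ∫ x, (peval (fun β => Real.sqrt lam * Pc α β) x) ^ 2 ∂μ
      = 1/2 * ((Fintype.card (MIdx p d) : ℝ) * lam) := by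
    congr 1
    rw [Finset.sum_congr rfl fun α _ => hintQstar α, Finset.sum_const, Finset.card_univ,
      nsmul_eq_mul]
  refine ⟨⟨fun α β h => ?_, fun α => ?_, ?_⟩, ?_, ?_, ?_⟩
  · -- feasibility (i)
    show Real.sqrt lam * Pc α β = 0
    rw [hcoef α β h, mul_zero]
  · -- feasibility (ii)
    show Real.exp (Real.log (Real.sqrt lam * Pc α α)) ≤ Real.sqrt lam * Pc α α
    rw [Real.exp_log (mul_pos hsqrtpos (hlead α))]
  · -- feasibility (iii)
    show ∑ α : MIdx p d, Real.log (Real.sqrt lam * Pc α α) = 0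
    rw [Finset.sum_congr rfl fun α _ => hθstar_eq α, Finset.sum_add_distrib,
      Finset.sum_const, Finset.card_univ, nsmul_eq_mul, hlogz]
    have h3 : (Fintype.card (MIdx p d) : ℝ) * (a / 2) = (-2 * Real.log z) / 2 := by
      rw [← hcard_a]; ring
    linarith
  · -- optimality
    intro Q θ hfeas
    obtain ⟨h1, h2, h3⟩ := hfeas
    show (1/2 : ℝ) * ∑ α : MIdx p d,
        ∫ x, (peval (fun β => Real.sqrt lam * Pc α β) x) ^ 2 ∂μ
      ≤ (1/2 : ℝ) * ∑ α : MIdx p d, ∫ x, (peval (Q α) x) ^ 2 ∂μ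
    rw [hobjstar]
    have h4 : ∑ α : MIdx p d, lam * (1 + (2 * θ α - 2 * Real.log (Pc α α) - a))
        ≤ ∑ α : MIdx p d, ∫ x, (peval (Q α) x) ^ 2 ∂μ :=
      Finset.sum_le_sum fun α _ => (hstep Q θ h1 h2 α).1
    rw [hsumlam θ h3] at h4
    linarith
  · -- uniqueness
    intro Q θ hfeas heq
    obtain ⟨h1, h2, h3⟩ := hfeas
    beta_reduce at heq
    have heq' : (1/2 : ℝ) * ∑ α : MIdx p d, ∫ x, (peval (Q α) x) ^ 2 ∂μ
        = 1/2 * ((Fintype.card (MIdx p d) : ℝ) * lam) := heq.trans hobjstar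
    have hkey : ∀ α : MIdx p d, ∫ x, (peval (Q α) x) ^ 2 ∂μ
        = lam * (1 + (2 * θ α - 2 * Real.log (Pc α α) - a)) := by
      have hge := fun α => (hstep Q θ h1 h2 α).1
      have hsum0 : ∑ α : MIdx p d, (∫ x, (peval (Q α) x) ^ 2 ∂μ
          - lam * (1 + (2 * θ α - 2 * Real.log (Pc α α) - a))) = 0 := by
        rw [Finset.sum_sub_distrib, hsumlam θ h3]
        linarith
      intro α
      have h5 := (Finset.sum_eq_zero_iff_of_nonneg
        (fun α _ => sub_nonneg.2 (hge α))).mp hsum0 α (Finset.mem_univ α)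
      linarith
    constructor
    · funext α
      exact ((hstep Q θ h1 h2 α).2 (hkey α)).2
    · funext α
      rw [hθstar_eq α]
      exact ((hstep Q θ h1 h2 α).2 (hkey α)).1
  · -- the SOS identity
    intro x
    beta_reduce
    have hv : ∀ α : MIdx p d,
        (peval (fun β => Real.sqrt lam * Pc α β) x) ^ 2 = lam * (peval (Pc α) x) ^ 2 :=
      fun α => by rw [hpevalQstar, mul_pow, Real.sq_sqrt hlampos.le]
    have hLv : L *ᵥ vvec d x = fun α => peval (Pc α) x := by
      funext α
      rw [mulVec_apply']
      rfl
    have hrhs : vvec d x ⬝ᵥ M⁻¹ *ᵥ vvec d x = ∑ α : MIdx p d, (peval (Pc α) x) ^ 2 := by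
      rw [hMinv, ← Matrix.mulVec_mulVec, Matrix.dotProduct_mulVec, Matrix.vecMul_transpose, hLv]
      simp [dotProduct, pow_two]
    rw [Finset.sum_congr rfl fun α _ => hv α, ← Finset.mul_sum, hrhs]
end
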